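/- Let q ≥ 2 and C₁ > 0. There exists a constant C (depending only on q and C₁) such that: for all integers 0 ≤ l₀ ≤ l₁, every family of differentiable functions (ψ_{j,l})_{l₀ ≤ j ≤ l₁, 0 ≤ l < 2^j} on [0,1] satisfying the vaguelet value and derivative decay bounds with constants C₁ and q, and all θ, θ′ ∈ [0,1]: Σ_{j=l₀}^{l₁} Σ_{l=0}^{2^j−1} ( ψ_{j,l}(θ) − ψ_{j,l}(θ′) )² ≤ C·2^{l₁}·|θ − θ′|. -/

import Mathlib

open MeasureTheory

/-- The dyadic subinterval `J_{j,l} = [l 2^{-j}, (l+1) 2^{-j}]` of `[0,1]`. -/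
def dyadicI (j l : ℕ) : Set ℝ := Set.Icc ((l : ℝ) / 2 ^ j) (((l : ℝ) + 1) / 2 ^ j)

/-- Distance between two points of `[0,1]` on the circle `ℝ/ℤ`. -/
noncomputable def circleDist (x y : ℝ) : ℝ := ⨅ k : ℤ, |x - y + (k : ℝ)|

/-- Distance from a point to a set on the circle `ℝ/ℤ`. -/
noncomputable def circleDistToSet (θ : ℝ) (J : Set ℝ) : ℝ := ⨅ x : J, circleDist θ (x : ℝ)


lemma aux_sum_range_inv_sq (M : ℕ) :
    ∑ v ∈ Finset.range (M+1), (1:ℝ)/((v:ℝ)+1)^2 ≤ 2 - 1/((M:ℝ)+1) := by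
  induction M with
  | zero => norm_num
  | succ M ih =>
    rw [Finset.sum_range_succ]
    have h1 : (0:ℝ) < (M:ℝ)+1 := by positivity
    have h2 : (0:ℝ) < (M:ℝ)+2 := by positivity
    have key : (1:ℝ)/((M:ℝ)+2)^2 ≤ 1/(((M:ℝ)+1)*((M:ℝ)+2)) := by
      rw [div_le_div_iff₀ (by positivity) (by positivity)]
      nlinarith [(Nat.cast_nonneg M : (0:ℝ) ≤ M)]
    have key2 : 1/(((M:ℝ)+1)*((M:ℝ)+2)) = 1/((M:ℝ)+1) - 1/((M:ℝ)+2) := by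
      field_simp
      ring
    push_cast
    rw [show (M:ℝ)+1+1 = (M:ℝ)+2 from by ring]
    linarith

lemma aux_sum_finset_inv_sq (t : Finset ℕ) :
    ∑ v ∈ t, (1:ℝ)/((v:ℝ)+1)^2 ≤ 2 := by
  obtain ⟨M, hM⟩ := t.exists_nat_subset_range
  have hM' : t ⊆ Finset.range (M+1) := hM.trans (Finset.range_subset_range.2 (Nat.le_succ M))
  have h1 : ∑ v ∈ t, (1:ℝ)/((v:ℝ)+1)^2 ≤ ∑ v ∈ Finset.range (M+1), (1:ℝ)/((v:ℝ)+1)^2 :=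
    Finset.sum_le_sum_of_subset_of_nonneg hM' (fun i _ _ => by positivity)
  have h2 := aux_sum_range_inv_sq M
  have : (0:ℝ) ≤ 1/((M:ℝ)+1) := by positivity
  linarith

lemma aux_sum_inj (s : Finset ℕ) (g : ℕ → ℕ)
    (hg : ∀ a ∈ s, ∀ b ∈ s, g a = g b → a = b) :
    ∑ l ∈ s, (1:ℝ)/((g l : ℝ)+1)^2 ≤ 2 := by
  calc ∑ l ∈ s, (1:ℝ)/((g l : ℝ)+1)^2
      = ∑ v ∈ s.image g, (1:ℝ)/((v:ℝ)+1)^2 :=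
        (Finset.sum_image (f := fun v : ℕ => (1:ℝ)/((v:ℝ)+1)^2) hg).symm
    _ ≤ 2 := aux_sum_finset_inv_sq _

/-- Sum over one injective branch: distances to `n` on `{0,…,N-1}`. -/
lemma aux_sum_g_le_four (N n : ℕ) (g : ℕ → ℕ)
    (hg1 : ∀ a ∈ (Finset.range N).filter (· ≤ n), ∀ b ∈ (Finset.range N).filter (· ≤ n),
      g a = g b → a = b)
    (hg2 : ∀ a ∈ (Finset.range N).filter (¬ · ≤ n), ∀ b ∈ (Finset.range N).filter (¬ · ≤ n),
      g a = g b → a = b) :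
    ∑ l ∈ Finset.range N, (1:ℝ)/((g l : ℝ)+1)^2 ≤ 4 := by
  rw [← Finset.sum_filter_add_sum_filter_not (Finset.range N) (· ≤ n)]
  have h1 := aux_sum_inj _ g hg1
  have h2 := aux_sum_inj _ g hg2
  linarith

lemma aux_count (j n : ℕ) (hn : n ≤ 2^j) :
    ∑ l ∈ Finset.range (2^j),
      (1:ℝ)/(((min (Nat.dist l n) (2^j - Nat.dist l n) : ℕ):ℝ)+1)^2 ≤ 8 := by
  have step : ∀ l ∈ Finset.range (2^j),
      (1:ℝ)/(((min (Nat.dist l n) (2^j - Nat.dist l n) : ℕ):ℝ)+1)^2 ≤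
        (1:ℝ)/((Nat.dist l n : ℝ)+1)^2 + (1:ℝ)/(((2^j - Nat.dist l n : ℕ):ℝ)+1)^2 := by
    intro l _
    rcases min_choice (Nat.dist l n) (2^j - Nat.dist l n) with h | h <;> rw [h]
    · have : (0:ℝ) ≤ (1:ℝ)/(((2^j - Nat.dist l n : ℕ):ℝ)+1)^2 := by positivity
      linarith
    · have : (0:ℝ) ≤ (1:ℝ)/((Nat.dist l n : ℝ)+1)^2 := by positivity
      linarith
  have hsum := Finset.sum_le_sum step
  rw [Finset.sum_add_distrib] at hsum
  have hA : ∑ l ∈ Finset.range (2^j), (1:ℝ)/((Nat.dist l n : ℝ)+1)^2 ≤ 4 := by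
    apply aux_sum_g_le_four (2^j) n (fun l => Nat.dist l n)
    · intro a ha b hb hab
      simp only [Finset.mem_filter, Finset.mem_range] at ha hb
      simp only [Nat.dist] at hab
      omega
    · intro a ha b hb hab
      simp only [Finset.mem_filter, Finset.mem_range] at ha hb
      simp only [Nat.dist] at hab
      omega
  have hB : ∑ l ∈ Finset.range (2^j), (1:ℝ)/(((2^j - Nat.dist l n : ℕ):ℝ)+1)^2 ≤ 4 := by
    apply aux_sum_g_le_four (2^j) n (fun l => 2^j - Nat.dist l n)
    · intro a ha b hb hab
      simp only [Finset.mem_filter, Finset.mem_range] at ha hb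
      simp only [Nat.dist] at hab
      omega
    · intro a ha b hb hab
      simp only [Finset.mem_filter, Finset.mem_range] at ha hb
      simp only [Nat.dist] at hab
      omega
  linarith

lemma circleDist_nonneg (x y : ℝ) : 0 ≤ circleDist x y :=
  Real.iInf_nonneg fun _ => abs_nonneg _

lemma circleDistToSet_nonneg (θ : ℝ) (J : Set ℝ) : 0 ≤ circleDistToSet θ J :=
  Real.iInf_nonneg fun x => circleDist_nonneg θ x

lemma dyadicI_nonempty (j l : ℕ) : (dyadicI j l).Nonempty :=
  Set.nonempty_Icc.2 (by apply div_le_div_of_nonneg_right <;> [linarith; positivity])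

/-- Key geometric lower bound for the circle distance to a dyadic interval. -/
lemma dist_lower (j l : ℕ) (hl : l < 2^j) (θ : ℝ) (hθ : θ ∈ Set.Icc (0:ℝ) 1) :
    ((min (Nat.dist l ⌊θ * 2^j⌋₊) (2^j - Nat.dist l ⌊θ * 2^j⌋₊) : ℕ) : ℝ) - 1
      ≤ 2^j * circleDistToSet θ (dyadicI j l) := by
  set n : ℕ := ⌊θ * 2^j⌋₊ with hn
  set m : ℕ := min (Nat.dist l n) (2^j - Nat.dist l n) with hm
  obtain ⟨hθ0, hθ1⟩ := hθ
  have h2j : (0:ℝ) < 2^j := by positivity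
  have hn1 : (n:ℝ) ≤ θ * 2^j := Nat.floor_le (by positivity)
  have hn2 : θ * 2^j < (n:ℝ) + 1 := Nat.lt_floor_add_one _
  have hdist_le : Nat.dist l n ≤ 2^j := by
    have hnn : n ≤ 2^j := by
      have : θ * 2^j ≤ ((2^j : ℕ) : ℝ) := by push_cast; nlinarith
      calc n = ⌊θ * 2^j⌋₊ := rfl
        _ ≤ ⌊((2^j : ℕ) : ℝ)⌋₊ := Nat.floor_le_floor this
        _ = 2^j := Nat.floor_natCast _
    simp only [Nat.dist]
    omega
  have hD : ((Nat.dist l n : ℕ) : ℝ) = |(l:ℝ) - (n:ℝ)| := by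
    rcases le_total l n with h | h
    · rw [Nat.dist_eq_sub_of_le h, abs_sub_comm, abs_of_nonneg (by
        have := (Nat.cast_le (α := ℝ)).2 h; linarith)]
      push_cast [h]; ring
    · rw [Nat.dist_eq_sub_of_le_right h, abs_of_nonneg (by
        have := (Nat.cast_le (α := ℝ)).2 h; linarith)]
      push_cast [h]; ring
  have hm1 : (m:ℝ) ≤ |(l:ℝ) - (n:ℝ)| := by
    rw [← hD]; exact_mod_cast Nat.cast_le.2 (min_le_left _ _)
  have hm2 : (m:ℝ) ≤ 2^j - |(l:ℝ) - (n:ℝ)| := by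
    have h1 : (m:ℕ) ≤ 2^j - Nat.dist l n := min_le_right _ _
    have h2 : ((2^j - Nat.dist l n : ℕ) : ℝ) = 2^j - (Nat.dist l n : ℝ) := by
      push_cast [hdist_le]; ring
    rw [← hD]
    calc (m:ℝ) ≤ ((2^j - Nat.dist l n : ℕ) : ℝ) := Nat.cast_le.2 h1
      _ = 2^j - (Nat.dist l n : ℝ) := by rw [h2, hD]
  have hm3 : (m:ℝ) ≤ 2^j := by
    have := abs_nonneg ((l:ℝ) - (n:ℝ)); linarith
  have key : ∀ x : dyadicI j l, ((m:ℝ) - 1) / 2^j ≤ circleDist θ (x:ℝ) := by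
    rintro ⟨x, hx1, hx2⟩
    have hx1' : (l:ℝ) ≤ x * 2^j := by
      rw [div_le_iff₀ h2j] at hx1; linarith
    have hx2' : x * 2^j ≤ (l:ℝ) + 1 := by
      rw [le_div_iff₀ h2j] at hx2; linarith
    have hx0 : 0 ≤ x := le_trans (by positivity) hx1
    have hxle1 : x ≤ 1 := by
      have h5 : (l:ℝ) + 1 ≤ ((2^j : ℕ):ℝ) := by exact_mod_cast Nat.succ_le_of_lt hl
      push_cast at h5
      nlinarith
    apply le_ciInf
    intro k
    rw [div_le_iff₀ h2j, mul_comm]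
    have hrw : (2:ℝ)^j * |θ - x + (k:ℝ)| = |θ*2^j - x*2^j + (k:ℝ)*2^j| := by
      have h6 : θ*2^j - x*2^j + (k:ℝ)*2^j = 2^j * (θ - x + k) := by ring
      rw [h6, abs_mul, abs_of_pos h2j]
    rw [hrw]
    by_cases hk0 : k = 0
    · subst hk0
      push_cast
      rcases abs_cases ((l:ℝ) - n) with ⟨e, es⟩ | ⟨e, es⟩ <;>
        rcases abs_cases (θ*2^j - x*2^j + 0*2^j) with ⟨e2, es2⟩ | ⟨e2, es2⟩ <;>
        rw [e2] <;> [skip; skip; skip; skip] <;> linarith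
    by_cases hk1 : k = 1
    · subst hk1
      push_cast
      rcases abs_cases ((l:ℝ) - n) with ⟨e, es⟩ | ⟨e, es⟩ <;>
        rcases abs_cases (θ*2^j - x*2^j + 1*2^j) with ⟨e2, es2⟩ | ⟨e2, es2⟩ <;>
        rw [e2] <;> linarith
    by_cases hkm1 : k = -1
    · subst hkm1
      push_cast
      rcases abs_cases ((l:ℝ) - n) with ⟨e, es⟩ | ⟨e, es⟩ <;>
        rcases abs_cases (θ*2^j - x*2^j + (-1)*2^j) with ⟨e2, es2⟩ | ⟨e2, es2⟩ <;>
        rw [e2] <;> linarith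
    · have hk2' : (2:ℤ) ≤ k ∨ k ≤ -2 := by omega
      have hk2 : (2:ℝ) ≤ |(k:ℝ)| := by
        rcases hk2' with h | h
        · have h' : (2:ℝ) ≤ (k:ℝ) := by exact_mod_cast h
          exact h'.trans (le_abs_self _)
        · have h' : (k:ℝ) ≤ -2 := by exact_mod_cast h
          have := neg_le_abs (k:ℝ)
          linarith
      have htri : |(k:ℝ)| ≤ |θ*2^j - x*2^j + (k:ℝ)*2^j| / 2^j + |θ - x| := by
        have h7 : |θ*2^j - x*2^j + (k:ℝ)*2^j| / 2^j = |θ - x + k| := by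
          rw [← hrw, mul_comm, mul_div_assoc, div_self (ne_of_gt h2j), mul_one]
        rw [h7]
        calc |(k:ℝ)| = |(θ - x + k) + (x - θ)| := by ring_nf
          _ ≤ |θ - x + k| + |x - θ| := abs_add_le _ _
          _ = |θ - x + k| + |θ - x| := by rw [abs_sub_comm]
      have hxt : |θ - x| ≤ 1 := abs_le.2 ⟨by linarith, by linarith⟩
      have h1 : 2^j ≤ |θ*2^j - x*2^j + (k:ℝ)*2^j| := by
        have h9 : 1 ≤ |θ*2^j - x*2^j + (k:ℝ)*2^j| / 2^j := by linarith
        rw [le_div_iff₀ h2j] at h9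
        linarith
      linarith
  have hJ : Nonempty (dyadicI j l) := (dyadicI_nonempty j l).to_subtype
  have h8 := le_ciInf key
  rw [← div_le_iff₀' h2j]
  exact h8

/-- value bound in counting form -/
lemma value_bound (q C₁ : ℝ) (hq : 2 ≤ q) (hC₁ : 0 < C₁) (j l : ℕ) (hl : l < 2^j)
    (v θ : ℝ) (hθ : θ ∈ Set.Icc (0:ℝ) 1)
    (hb : |v| ≤ C₁ * (1 + 2^j * circleDistToSet θ (dyadicI j l)) ^ (-q)) :
    |v| ≤ 4*C₁ *
      (1/(((min (Nat.dist l ⌊θ*2^j⌋₊) (2^j - Nat.dist l ⌊θ*2^j⌋₊) : ℕ):ℝ)+1)^2) := by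
  set m : ℕ := min (Nat.dist l ⌊θ*2^j⌋₊) (2^j - Nat.dist l ⌊θ*2^j⌋₊) with hm
  set d : ℝ := circleDistToSet θ (dyadicI j l) with hd
  have hd0 : 0 ≤ d := circleDistToSet_nonneg θ _
  have h2j : (0:ℝ) < 2^j := by positivity
  have hdl : (m:ℝ) - 1 ≤ 2^j * d := dist_lower j l hl θ hθ
  have hb1 : (1:ℝ) ≤ 1 + 2^j * d := by nlinarith
  have hb0 : (0:ℝ) ≤ 1 + 2^j * d := by linarith
  have h1 : (1 + 2^j * d) ^ (-q) ≤ (1 + 2^j * d) ^ ((-2:ℝ)) :=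
    Real.rpow_le_rpow_of_exponent_le hb1 (by linarith)
  have h2 : (1 + 2^j * d) ^ ((-2:ℝ)) = ((1 + 2^j * d)^(2:ℕ))⁻¹ := by
    rw [show ((-2:ℝ)) = -((2:ℕ):ℝ) by norm_num, Real.rpow_neg hb0, Real.rpow_natCast]
  have h3 : ((1 + 2^j * d)^(2:ℕ))⁻¹ ≤ 4 * (1/(((m:ℕ):ℝ)+1)^2) := by
    rw [inv_eq_one_div, mul_one_div, div_le_div_iff₀ (by positivity) (by positivity)]
    have hm0 : (0:ℝ) ≤ (m:ℝ) := Nat.cast_nonneg m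
    have hjd : (0:ℝ) ≤ 2^j * d := by positivity
    nlinarith [sq_nonneg ((m:ℝ) - 1 - 2^j*d)]
  calc |v| ≤ C₁ * (1 + 2^j * d) ^ (-q) := hb
    _ ≤ C₁ * (4 * (1/(((m:ℕ):ℝ)+1)^2)) := by
        apply mul_le_mul_of_nonneg_left _ hC₁.le
        exact le_trans h1 (le_trans (le_of_eq h2) h3)
    _ = 4*C₁ * (1/(((m:ℕ):ℝ)+1)^2) := by ring

lemma floor_le_pow (j : ℕ) (θ : ℝ) (hθ : θ ∈ Set.Icc (0:ℝ) 1) : ⌊θ * 2^j⌋₊ ≤ 2^j := by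
  obtain ⟨h0, h1⟩ := hθ
  have h2j : (0:ℝ) < 2^j := by positivity
  have : θ * 2^j ≤ ((2^j : ℕ) : ℝ) := by push_cast; nlinarith
  calc ⌊θ * 2^j⌋₊ ≤ ⌊((2^j : ℕ) : ℝ)⌋₊ := Nat.floor_le_floor this
    _ = 2^j := Nat.floor_natCast _


/-- Second-moment bound for increments of the Gaussian field over the dyadic
levels `l₀ ≤ j ≤ l₁`: if the `ψ_{j,l}` are differentiable and satisfy the value and derivative
decay bounds with constants `C₁, q` (`q ≥ 2`), then for all `θ, θ' ∈ [0,1]`,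
`Σ_{j=l₀}^{l₁} Σ_{l<2^j} (ψ_{j,l}(θ) - ψ_{j,l}(θ'))² ≤ C 2^{l₁} |θ - θ'|`
with `C = C(q, C₁)`. -/
theorem block_increment_bound (q C₁ : ℝ) (hq : 2 ≤ q) (hC₁ : 0 < C₁) :
    ∃ C : ℝ, 0 < C ∧
      ∀ l₀ l₁ : ℕ, l₀ ≤ l₁ →
      ∀ ψ : ℕ → ℕ → ℝ → ℝ,
        (∀ j, l₀ ≤ j → j ≤ l₁ → ∀ l < 2 ^ j, Differentiable ℝ (ψ j l)) →
        (∀ j, l₀ ≤ j → j ≤ l₁ → ∀ l < 2 ^ j, ∀ θ ∈ Set.Icc (0:ℝ) 1,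
          |ψ j l θ| ≤ C₁ * (1 + 2 ^ j * circleDistToSet θ (dyadicI j l)) ^ (-q) ∧
          |deriv (ψ j l) θ| ≤
            C₁ * 2 ^ j * (1 + 2 ^ j * circleDistToSet θ (dyadicI j l)) ^ (-(q - 1))) →
      ∀ θ ∈ Set.Icc (0:ℝ) 1, ∀ θ' ∈ Set.Icc (0:ℝ) 1,
        (∑ j ∈ Finset.Icc l₀ l₁, ∑ l ∈ Finset.range (2 ^ j),
            (ψ j l θ - ψ j l θ') ^ 2) ≤ C * 2 ^ l₁ * |θ - θ'| := by
  refine ⟨128 * C₁^2, by positivity, ?_⟩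
  intro l₀ l₁ hl01 ψ hdiff hbound θ hθ θ' hθ'
  set A := |θ - θ'| with hA
  have hA0 : 0 ≤ A := abs_nonneg _
  -- per-level bound
  have perj : ∀ j ∈ Finset.Icc l₀ l₁,
      ∑ l ∈ Finset.range (2^j), (ψ j l θ - ψ j l θ')^2 ≤ 64*C₁^2*2^j*A := by
    intro j hj
    rw [Finset.mem_Icc] at hj
    obtain ⟨hj1, hj2⟩ := hj
    have h2j : (0:ℝ) < 2^j := by positivity
    -- MVT: Lipschitz bound, uniform in l
    have hmvt : ∀ l < 2^j, |ψ j l θ - ψ j l θ'| ≤ C₁ * 2^j * A := by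
      intro l hl
      have hder : ∀ x ∈ Set.Icc (0:ℝ) 1, ‖deriv (ψ j l) x‖ ≤ C₁ * 2^j := by
        intro x hx
        have hb := (hbound j hj1 hj2 l hl x hx).2
        have hd0 : 0 ≤ circleDistToSet x (dyadicI j l) := circleDistToSet_nonneg _ _
        have hone : (1 + 2^j * circleDistToSet x (dyadicI j l)) ^ (-(q-1)) ≤ 1 :=
          Real.rpow_le_one_of_one_le_of_nonpos (by nlinarith) (by linarith)
        have : C₁ * 2^j * (1 + 2^j * circleDistToSet x (dyadicI j l)) ^ (-(q-1))
            ≤ C₁ * 2^j * 1 := by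
          apply mul_le_mul_of_nonneg_left hone (by positivity)
        rw [Real.norm_eq_abs]
        calc |deriv (ψ j l) x| ≤ _ := hb
          _ ≤ C₁ * 2^j * 1 := this
          _ = C₁ * 2^j := by ring
      have h := Convex.norm_image_sub_le_of_norm_deriv_le
        (fun x _ => (hdiff j hj1 hj2 l hl).differentiableAt)
        hder (convex_Icc (0:ℝ) 1) hθ' hθ
      rw [Real.norm_eq_abs, Real.norm_eq_abs] at h
      exact h
    -- pointwise bound, summed
    set n : ℕ := ⌊θ*2^j⌋₊ with hn
    set n' : ℕ := ⌊θ'*2^j⌋₊ with hn'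
    have main : ∀ l ∈ Finset.range (2^j), (ψ j l θ - ψ j l θ')^2 ≤
        (C₁*2^j*A) * ((4*C₁) * (1/(((min (Nat.dist l n) (2^j - Nat.dist l n) : ℕ):ℝ)+1)^2)
          + (4*C₁) * (1/(((min (Nat.dist l n') (2^j - Nat.dist l n') : ℕ):ℝ)+1)^2)) := by
      intro l hlr
      rw [Finset.mem_range] at hlr
      have hv1 := value_bound q C₁ hq hC₁ j l hlr (ψ j l θ) θ hθ (hbound j hj1 hj2 l hlr θ hθ).1
      have hv2 := value_bound q C₁ hq hC₁ j l hlr (ψ j l θ') θ' hθ' (hbound j hj1 hj2 l hlr θ' hθ').1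
      have habs : |ψ j l θ - ψ j l θ'| ≤ |ψ j l θ| + |ψ j l θ'| := by
        calc |ψ j l θ - ψ j l θ'| = |ψ j l θ + -(ψ j l θ')| := by rw [sub_eq_add_neg]
          _ ≤ |ψ j l θ| + |-(ψ j l θ')| := abs_add_le _ _
          _ = |ψ j l θ| + |ψ j l θ'| := by rw [abs_neg]
      calc (ψ j l θ - ψ j l θ')^2 = |ψ j l θ - ψ j l θ'| * |ψ j l θ - ψ j l θ'| := by
            rw [abs_mul_abs_self]; ring
        _ ≤ (C₁*2^j*A) * (|ψ j l θ| + |ψ j l θ'|) := by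
            apply mul_le_mul (hmvt l hlr) habs (abs_nonneg _) (by positivity)
        _ ≤ (C₁*2^j*A) * _ := by
            apply mul_le_mul_of_nonneg_left (add_le_add hv1 hv2) (by positivity)
    have hcount1 := aux_count j n (floor_le_pow j θ hθ)
    have hcount2 := aux_count j n' (floor_le_pow j θ' hθ')
    calc ∑ l ∈ Finset.range (2^j), (ψ j l θ - ψ j l θ')^2
        ≤ ∑ l ∈ Finset.range (2^j), (C₁*2^j*A) *
            ((4*C₁) * (1/(((min (Nat.dist l n) (2^j - Nat.dist l n) : ℕ):ℝ)+1)^2)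
            + (4*C₁) * (1/(((min (Nat.dist l n') (2^j - Nat.dist l n') : ℕ):ℝ)+1)^2)) :=
          Finset.sum_le_sum main
      _ = (C₁*2^j*A) * ((4*C₁) * ∑ l ∈ Finset.range (2^j),
              (1/(((min (Nat.dist l n) (2^j - Nat.dist l n) : ℕ):ℝ)+1)^2)
            + (4*C₁) * ∑ l ∈ Finset.range (2^j),
              (1/(((min (Nat.dist l n') (2^j - Nat.dist l n') : ℕ):ℝ)+1)^2)) := by
          rw [← Finset.mul_sum, Finset.sum_add_distrib, ← Finset.mul_sum, ← Finset.mul_sum]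
      _ ≤ (C₁*2^j*A) * ((4*C₁) * 8 + (4*C₁) * 8) := by
          apply mul_le_mul_of_nonneg_left _ (by positivity)
          have h4 : (0:ℝ) ≤ 4*C₁ := by positivity
          apply add_le_add
          · exact mul_le_mul_of_nonneg_left hcount1 h4
          · exact mul_le_mul_of_nonneg_left hcount2 h4
      _ = 64*C₁^2*2^j*A := by ring
  -- sum over levels
  have hgeo : ∑ j ∈ Finset.Icc l₀ l₁, (2:ℝ)^j ≤ 2^(l₁+1) := by
    have hsub : Finset.Icc l₀ l₁ ⊆ Finset.range (l₁+1) := by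
      intro i hi
      rw [Finset.mem_Icc] at hi
      rw [Finset.mem_range]
      omega
    calc ∑ j ∈ Finset.Icc l₀ l₁, (2:ℝ)^j
        ≤ ∑ j ∈ Finset.range (l₁+1), (2:ℝ)^j :=
          Finset.sum_le_sum_of_subset_of_nonneg hsub (fun i _ _ => by positivity)
      _ = 2^(l₁+1) - 1 := by
          rw [geom_sum_eq (by norm_num : (2:ℝ) ≠ 1)]
          norm_num
      _ ≤ 2^(l₁+1) := by linarith
  calc ∑ j ∈ Finset.Icc l₀ l₁, ∑ l ∈ Finset.range (2^j), (ψ j l θ - ψ j l θ')^2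
      ≤ ∑ j ∈ Finset.Icc l₀ l₁, 64*C₁^2*2^j*A := Finset.sum_le_sum perj
    _ = (64*C₁^2*A) * ∑ j ∈ Finset.Icc l₀ l₁, (2:ℝ)^j := by
        rw [Finset.mul_sum]
        apply Finset.sum_congr rfl
        intro j _
        ring
    _ ≤ (64*C₁^2*A) * 2^(l₁+1) := by
        apply mul_le_mul_of_nonneg_left hgeo (by positivity)
    _ = 128 * C₁^2 * 2^l₁ * A := by ring
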